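/- Given any 3 cycles of a 6c4c of a bridgeless cubic graph, the subgraph consisting of edges covered 0, 1, or 2 times by these 3 cycles admits a nowhere-zero 4-flow. -/

import Mathlib

/-- An even subgraph (cycle) of `G`, given by its edge set: a subset of the
edges of `G` in which every vertex has even degree. -/
def IsEvenSubgraph {V : Type*} (G : SimpleGraph V) (E : Set (Sym2 V)) : Prop :=
  E ⊆ G.edgeSet ∧ ∀ v : V, Even (Set.ncard {w : V | s(v, w) ∈ E})

/-- A 6-cycle 4-cover: 6 even subgraphs such that every edge is covered
exactly 4 times. -/
def Is6c4c {V : Type*} (G : SimpleGraph V) (C : Fin 6 → Set (Sym2 V)) : Prop :=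
  (∀ i, IsEvenSubgraph G (C i)) ∧
  (∀ e ∈ G.edgeSet, Set.ncard {i : Fin 6 | e ∈ C i} = 4)

set_option linter.unusedVariables false

def pflow {V : Type*} [DecidableEq V] (u v : V) (x : V × V) : ℤ :=
  (if x = (u, v) then 1 else 0) - (if x = (v, u) then 1 else 0)

def wflow {V : Type*} [DecidableEq V] {H : SimpleGraph V} {a b : V} (p : H.Walk a b) (u v : V) : ℤ :=
  (p.darts.map (fun d => pflow u v d.toProd)).sum

lemma pflow_skew {V : Type*} [DecidableEq V] (u v : V) (x : V × V) : pflow u v x = - pflow v u x := by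
  unfold pflow; ring

lemma list_sum_neg {α : Type*} {f g : α → ℤ} (h : ∀ x, f x = -g x) (l : List α) :
    (l.map f).sum = -(l.map g).sum := by
  induction l with
  | nil => simp
  | cons x l ih => simp only [List.map_cons, List.sum_cons, ih, h x]; ring

lemma wflow_skew {V : Type*} [DecidableEq V] {H : SimpleGraph V} {a b : V} (p : H.Walk a b) (u v : V) :
    wflow p u v = - wflow p v u := by
  exact list_sum_neg (fun d => pflow_skew u v d.toProd) p.darts

lemma wflow_zero {V : Type*} [DecidableEq V] {H : SimpleGraph V} {a b : V} (p : H.Walk a b) (u v : V)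
    (h : s(u, v) ∉ p.edges) : wflow p u v = 0 := by
  unfold wflow
  apply List.sum_eq_zero
  intro x hx
  simp only [List.mem_map] at hx
  obtain ⟨d, hd, rfl⟩ := hx
  unfold pflow
  have hmem : d.edge ∈ p.edges := by
    rw [SimpleGraph.Walk.edges]
    exact List.mem_map_of_mem hd
  have hd1 : d.toProd ≠ (u, v) := by
    intro hdp
    apply h
    have : d.edge = s(u, v) := by rw [SimpleGraph.Dart.edge, hdp]
    rwa [this] at hmem
  have hd2 : d.toProd ≠ (v, u) := by
    intro hdp
    apply h
    have : d.edge = s(u, v) := by rw [SimpleGraph.Dart.edge, hdp]; exact Sym2.eq_swap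
    rwa [this] at hmem
  simp [hd1, hd2]

lemma wflow_pm {V : Type*} [DecidableEq V] {H : SimpleGraph V} {a b : V} (p : H.Walk a b) (u v : V)
    (hp : p.IsTrail) (h : s(u, v) ∈ p.edges) : wflow p u v = 1 ∨ wflow p u v = -1 := by
  induction p with
  | nil => simp at h
  | @cons x y z hadj q ih =>
    rw [SimpleGraph.Walk.isTrail_cons] at hp
    rw [SimpleGraph.Walk.edges_cons, List.mem_cons] at h
    have hdarts : wflow (SimpleGraph.Walk.cons hadj q) u v = pflow u v (x, y) + wflow q u v := by
      unfold wflow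
      simp [SimpleGraph.Walk.darts_cons, SimpleGraph.Dart.toProd]
    rcases h with h | h
    · have hq0 : wflow q u v = 0 := by
        apply wflow_zero
        rw [h]; exact hp.2
      rw [hdarts, hq0, add_zero]
      unfold pflow
      rw [Sym2.eq_iff] at h
      rcases h with ⟨rfl, rfl⟩ | ⟨rfl, rfl⟩
      · left; simp [hadj.ne]
      · right
        have : (v, u) ≠ (u, v) := by simp [hadj.ne']
        simp [this]
    · have h0 : pflow u v (x, y) = 0 := by
        unfold pflow
        have h1 : (x, y) ≠ (u, v) := by rintro h'; rw [Prod.mk.injEq] at h'; obtain ⟨rfl, rfl⟩ := h'; exact hp.2 h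
        have h2 : (x, y) ≠ (v, u) := by
          rintro h'; rw [Prod.mk.injEq] at h'; obtain ⟨rfl, rfl⟩ := h'
          exact hp.2 (by rwa [Sym2.eq_swap] at h)
        simp [h1, h2]
      rw [hdarts, h0, zero_add]
      exact ih hp.1 h

lemma wflow_cons {V : Type*} [DecidableEq V] {H : SimpleGraph V} {x y b : V} (hadj : H.Adj x y)
    (q : H.Walk y b) (u v : V) :
    wflow (SimpleGraph.Walk.cons hadj q) u v = pflow u v (x, y) + wflow q u v := by
  unfold wflow
  simp [SimpleGraph.Walk.darts_cons, SimpleGraph.Dart.toProd]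

lemma sum_pflow {V : Type*} [Fintype V] [DecidableEq V] (x y v : V) (hxy : x ≠ y) :
    ∑ w, pflow v w (x, y) = (if v = x then 1 else 0) - (if v = y then 1 else 0) := by
  unfold pflow
  rw [Finset.sum_sub_distrib]
  congr 1
  · have e1 : ∀ w, (if (x, y) = (v, w) then (1:ℤ) else 0)
        = (if v = x then (if w = y then (1:ℤ) else 0) else 0) := by
      intro w
      by_cases h1 : v = x <;> by_cases h2 : w = y <;> simp_all [Prod.ext_iff, eq_comm]
    rw [Finset.sum_congr rfl (fun w _ => e1 w)]
    by_cases h1 : v = x <;> simp [h1, Finset.sum_ite_eq']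
  · have e1 : ∀ w, (if (x, y) = (w, v) then (1:ℤ) else 0)
        = (if v = y then (if w = x then (1:ℤ) else 0) else 0) := by
      intro w
      by_cases h1 : v = y <;> by_cases h2 : w = x <;> simp_all [Prod.ext_iff, eq_comm]
    rw [Finset.sum_congr rfl (fun w _ => e1 w)]
    by_cases h1 : v = y <;> simp [h1, Finset.sum_ite_eq']

lemma wflow_div {V : Type*} [Fintype V] [DecidableEq V] {H : SimpleGraph V} {a b : V} (p : H.Walk a b) (v : V) :
    ∑ w, wflow p v w = (if v = a then 1 else 0) - (if v = b then 1 else 0) := by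
  induction p with
  | nil => simp [wflow]
  | @cons x y z hadj q ih =>
    have : ∀ w, wflow (SimpleGraph.Walk.cons hadj q) v w = pflow v w (x, y) + wflow q v w :=
      fun w => wflow_cons hadj q v w
    simp only [this]
    rw [Finset.sum_add_distrib, ih, sum_pflow x y v hadj.ne]
    ring

lemma trail_parity {V : Type*} [Fintype V] [DecidableEq V] {H : SimpleGraph V} {a b : V}
    (p : H.Walk a b) (hp : p.IsTrail) (v : V) :
    Even ({w | s(v, w) ∈ p.edges}.ncard + (if v = a then 1 else 0) + (if v = b then 1 else 0)) := by
  induction p with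
  | nil =>
    simp only [SimpleGraph.Walk.edges_nil, List.not_mem_nil, Set.setOf_false, Set.ncard_empty]
    by_cases hva : v = a <;> simp [hva]
  | @cons x y z hadj q ih =>
    rw [SimpleGraph.Walk.isTrail_cons] at hp
    have ih' := ih hp.1
    have hxy : x ≠ y := hadj.ne
    by_cases hva : v = x
    · subst hva
      have hvy : v ≠ y := hxy
      have hset : {w | s(v, w) ∈ (SimpleGraph.Walk.cons hadj q).edges}
          = insert y {w | s(v, w) ∈ q.edges} := by
        ext w
        simp only [SimpleGraph.Walk.edges_cons, List.mem_cons, Set.mem_setOf_eq,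
          Set.mem_insert_iff]
        constructor
        · rintro (h | h)
          · left; exact (Sym2.congr_right.mp h)
          · right; exact h
        · rintro (rfl | h)
          · left; rfl
          · right; exact h
      have hy : y ∉ {w | s(v, w) ∈ q.edges} := hp.2
      rw [hset, Set.ncard_insert_of_notMem hy (Set.toFinite _)]
      simp only [eq_self_iff_true, if_true, if_neg hvy] at ih' ⊢
      rw [Nat.even_iff] at ih' ⊢
      omega
    · by_cases hvy : v = y
      · subst hvy
        have hset : {w | s(v, w) ∈ (SimpleGraph.Walk.cons hadj q).edges}
            = insert x {w | s(v, w) ∈ q.edges} := by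
          ext w
          simp only [SimpleGraph.Walk.edges_cons, List.mem_cons, Set.mem_setOf_eq,
            Set.mem_insert_iff]
          constructor
          · rintro (h | h)
            · rw [Sym2.eq_iff] at h
              rcases h with ⟨h1, h2⟩ | ⟨h1, h2⟩
              · exact absurd h1 hva
              · left; exact h2
            · right; exact h
          · rintro (rfl | h)
            · left; exact Sym2.eq_swap
            · right; exact h
        have hx : x ∉ {w | s(v, w) ∈ q.edges} := by
          intro hmem
          have hmem' : s(v, x) ∈ q.edges := hmem
          rw [Sym2.eq_swap] at hmem'
          exact hp.2 hmem'
        rw [hset, Set.ncard_insert_of_notMem hx (Set.toFinite _)]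
        simp only [eq_self_iff_true, if_true, if_neg hva] at ih' ⊢
        rw [Nat.even_iff] at ih' ⊢
        omega
      · have hset : {w | s(v, w) ∈ (SimpleGraph.Walk.cons hadj q).edges}
            = {w | s(v, w) ∈ q.edges} := by
          ext w
          simp only [SimpleGraph.Walk.edges_cons, List.mem_cons, Set.mem_setOf_eq]
          constructor
          · rintro (h | h)
            · rw [Sym2.eq_iff] at h
              rcases h with ⟨h1, h2⟩ | ⟨h1, h2⟩
              · exact absurd h1 hva
              · exact absurd h1 hvy
            · exact h
          · intro h; right; exact h
        rw [hset]
        simpa [if_neg hva, if_neg hvy] using ih'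

lemma trail_length_le {V : Type*} [Fintype V] [DecidableEq V] (E : Set (Sym2 V))
    {a b : V} (p : (SimpleGraph.fromEdgeSet E).Walk a b) (hp : p.IsTrail) :
    p.length ≤ E.ncard := by
  classical
  have hfin : E.Finite := Set.toFinite E
  have h1 : p.edges.toFinset.card = p.length := by
    rw [List.toFinset_card_of_nodup hp.edges_nodup, SimpleGraph.Walk.length_edges]
  have h2 : p.edges.toFinset ⊆ hfin.toFinset := by
    intro e he
    rw [List.mem_toFinset] at he
    rw [Set.Finite.mem_toFinset]
    exact ((SimpleGraph.edgeSet_fromEdgeSet E) ▸ p.edges_subset_edgeSet he).1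
  calc p.length = p.edges.toFinset.card := h1.symm
    _ ≤ hfin.toFinset.card := Finset.card_le_card h2
    _ = E.ncard := (Set.ncard_eq_toFinset_card E hfin).symm

lemma walk_edges_mem {V : Type*} (E : Set (Sym2 V)) {a b : V}
    (p : (SimpleGraph.fromEdgeSet E).Walk a b) {e : Sym2 V} (he : e ∈ p.edges) : e ∈ E :=
  ((SimpleGraph.edgeSet_fromEdgeSet E) ▸ p.edges_subset_edgeSet he).1

lemma exists_closed_trail {V : Type*} [Fintype V] [DecidableEq V] (E : Set (Sym2 V))
    (hirr : ∀ v : V, s(v, v) ∉ E)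
    (heven : ∀ v : V, Even {w | s(v, w) ∈ E}.ncard)
    (hne : E.Nonempty) :
    ∃ (a : V) (p : (SimpleGraph.fromEdgeSet E).Walk a a), p.IsTrail ∧ 0 < p.length := by
  classical
  set H := SimpleGraph.fromEdgeSet E with hH
  set P : ℕ → Prop := fun n => ∃ (a b : V) (p : H.Walk a b), p.IsTrail ∧ p.length = n with hPdef
  obtain ⟨e, he⟩ := hne
  induction e using Sym2.ind with
  | _ u v =>
  have huv : u ≠ v := by rintro rfl; exact hirr u he
  have hadj : H.Adj u v := (SimpleGraph.fromEdgeSet_adj E).mpr ⟨he, huv⟩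
  have hB : 1 ≤ E.ncard := (Set.ncard_pos (Set.toFinite E)).mpr ⟨_, he⟩
  have hP1 : P 1 := ⟨u, v, SimpleGraph.Walk.cons hadj SimpleGraph.Walk.nil,
    by simp [SimpleGraph.Walk.isTrail_cons], by simp⟩
  set n0 := Nat.findGreatest P E.ncard with hn0
  have hn0pos : 1 ≤ n0 := Nat.le_findGreatest hB hP1
  have hPn0 : P n0 := Nat.findGreatest_spec hB hP1
  obtain ⟨a, b, p, hp, hlen⟩ := hPn0
  by_cases hab : a = b
  · subst hab
    exact ⟨a, p, hp, by omega⟩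
  · exfalso
    have hparity := trail_parity p hp b
    rw [if_neg (Ne.symm hab), if_pos rfl] at hparity
    have hsub : {w | s(b, w) ∈ p.edges} ⊆ {w | s(b, w) ∈ E} :=
      fun w hw => walk_edges_mem E p hw
    have hne' : {w | s(b, w) ∈ p.edges} ≠ {w | s(b, w) ∈ E} := by
      intro hEq
      have hevenb := heven b
      rw [← hEq] at hevenb
      rw [Nat.even_iff] at hparity hevenb
      omega
    obtain ⟨w, hwE, hwP⟩ := Set.exists_of_ssubset (hsub.ssubset_of_ne hne')
    have hbw : b ≠ w := by rintro rfl; exact hirr b hwE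
    have hadj2 : H.Adj b w := (SimpleGraph.fromEdgeSet_adj E).mpr ⟨hwE, hbw⟩
    set q := p.append (SimpleGraph.Walk.cons hadj2 SimpleGraph.Walk.nil) with hq
    have hq_edges : q.edges = p.edges ++ [s(b, w)] := by
      simp [hq, SimpleGraph.Walk.edges_append]
    have hq_trail : q.IsTrail := by
      rw [SimpleGraph.Walk.isTrail_def, hq_edges, List.nodup_append]
      refine ⟨hp.edges_nodup, List.nodup_singleton _, fun e heP heS hS => ?_⟩
      rw [List.mem_singleton] at hS
      rw [hS]; rintro rfl
      exact hwP heP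
    have hq_len : q.length = n0 + 1 := by
      simp [hq, SimpleGraph.Walk.length_append, hlen]
    have hq_bound : n0 + 1 ≤ E.ncard := hq_len ▸ trail_length_le E q hq_trail
    have hgt : n0 < n0 + 1 := by omega
    exact Nat.findGreatest_is_greatest (P := P) hgt hq_bound ⟨a, w, q, hq_trail, hq_len⟩

lemma evenflow {V : Type*} [Fintype V] [DecidableEq V] :
    ∀ (n : ℕ) (E : Set (Sym2 V)), E.ncard = n →
    (∀ v : V, s(v, v) ∉ E) →
    (∀ v : V, Even {w | s(v, w) ∈ E}.ncard) →
    ∃ f : V → V → ℤ,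
      (∀ u v, f u v = - f v u) ∧
      (∀ u v, f u v ≠ 0 ↔ s(u, v) ∈ E) ∧
      (∀ u v, f u v = 0 ∨ f u v = 1 ∨ f u v = -1) ∧
      (∀ v, ∑ w, f v w = 0) := by
  intro n
  induction n using Nat.strong_induction_on with
  | _ n ih =>
  intro E hcard hirr heven
  rcases Set.eq_empty_or_nonempty E with rfl | hne
  · exact ⟨fun _ _ => 0, by simp, by simp, by simp, by simp⟩
  obtain ⟨a, p, hp, hlen⟩ := exists_closed_trail E hirr heven hne
  set E' := E \ {e | e ∈ p.edges} with hE'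
  have hpE : ∀ {e : Sym2 V}, e ∈ p.edges → e ∈ E := fun he => walk_edges_mem E p he
  have hedges_ne : p.edges ≠ [] := by
    intro h
    rw [← SimpleGraph.Walk.length_edges, h] at hlen
    simp at hlen
  have hcard' : E'.ncard < n := by
    rw [← hcard]
    apply Set.ncard_lt_ncard _ (Set.toFinite E)
    constructor
    · exact Set.diff_subset
    · intro hsub
      obtain ⟨e0, he0⟩ := List.exists_mem_of_ne_nil _ hedges_ne
      exact (hsub (hpE he0)).2 he0
  have hirr' : ∀ v : V, s(v, v) ∉ E' := fun v h => hirr v h.1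
  have heven' : ∀ v : V, Even {w | s(v, w) ∈ E'}.ncard := by
    intro v
    have hsetE' : {w | s(v, w) ∈ E'} = {w | s(v, w) ∈ E} \ {w | s(v, w) ∈ p.edges} := by
      ext w; simp [hE']
    have hsub_v : {w | s(v, w) ∈ p.edges} ⊆ {w | s(v, w) ∈ E} := fun w hw => hpE hw
    have hle := Set.ncard_le_ncard hsub_v (Set.toFinite _)
    have hEp : Even {w | s(v, w) ∈ p.edges}.ncard := by
      have := trail_parity p hp v
      by_cases hva : v = a
      · simp only [if_pos hva] at this
        rw [Nat.even_iff] at this ⊢; omega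
      · simp only [if_neg hva] at this
        rw [Nat.even_iff] at this ⊢; omega
    rw [hsetE', Set.ncard_diff hsub_v]
    have hEE := heven v
    rw [Nat.even_iff] at hEE hEp ⊢
    omega
  obtain ⟨f', h1, h2, h3, h4⟩ := ih E'.ncard hcard' E' rfl hirr' heven'
  refine ⟨fun u v => wflow p u v + f' u v, ?_, ?_, ?_, ?_⟩
  · intro u v
    show wflow p u v + f' u v = -(wflow p v u + f' v u)
    rw [wflow_skew p u v, h1 u v]
    ring
  · intro u v
    show wflow p u v + f' u v ≠ 0 ↔ s(u, v) ∈ E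
    by_cases hm : s(u, v) ∈ p.edges
    · have hw := wflow_pm p u v hp hm
      have hf0 : f' u v = 0 := by
        by_contra h
        exact ((h2 u v).mp h).2 hm
      constructor
      · intro _; exact hpE hm
      · intro _
        rcases hw with h | h <;> rw [h, hf0] <;> norm_num
    · have hw0 := wflow_zero p u v hm
      rw [hw0, zero_add]
      rw [h2 u v]
      constructor
      · intro h; exact h.1
      · intro h; exact ⟨h, hm⟩
  · intro u v
    show wflow p u v + f' u v = 0 ∨ wflow p u v + f' u v = 1 ∨ wflow p u v + f' u v = -1
    by_cases hm : s(u, v) ∈ p.edges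
    · have hw := wflow_pm p u v hp hm
      have hf0 : f' u v = 0 := by
        by_contra h
        exact ((h2 u v).mp h).2 hm
      rcases hw with h | h <;> rw [h, hf0] <;> norm_num
    · rw [wflow_zero p u v hm, zero_add]
      exact h3 u v
  · intro v
    show ∑ w, (wflow p v w + f' v w) = 0
    rw [Finset.sum_add_distrib, h4 v, wflow_div p v]
    ring



lemma even_symmdiff_ncard {V : Type*} [Fintype V] (S T : Set V)
    (hS : Even S.ncard) (hT : Even T.ncard) : Even ((S \ T) ∪ (T \ S)).ncard := by
  rw [Set.ncard_union_eq disjoint_sdiff_sdiff (Set.toFinite _) (Set.toFinite _)]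
  have h1 := Set.ncard_inter_add_ncard_diff_eq_ncard S T (Set.toFinite _)
  have h2 := Set.ncard_inter_add_ncard_diff_eq_ncard T S (Set.toFinite _)
  rw [Set.inter_comm T S] at h2
  rw [Nat.even_iff] at hS hT ⊢
  omega

lemma fin3_ncard_le_two {P : Fin 3 → Prop} (j0 : Fin 3) (h0 : ¬ P j0) :
    {j | P j}.ncard ≤ 2 := by
  by_contra h
  push_neg at h
  have huniv : ({j | P j} : Set (Fin 3)) = Set.univ := by
    apply Set.eq_of_subset_of_ncard_le (Set.subset_univ _) _ Set.finite_univ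
    rw [Set.ncard_univ]
    simp only [Nat.card_eq_fintype_card, Fintype.card_fin]
    omega
  rw [Set.eq_univ_iff_forall] at huniv
  exact h0 (huniv j0)


/-- Given any 3 cycles of a 6c4c of a bridgeless cubic graph, the subgraph
consisting of the edges covered 0, 1 or 2 times by these 3 cycles admits a
nowhere-zero 4-flow: a skew-symmetric, divergence-free integer flow that is
nonzero exactly on these edges, with all values of absolute value < 4. -/
theorem stmt12 {V : Type*} [Fintype V] (G : SimpleGraph V)
    (hbridgeless : ∀ e ∈ G.edgeSet, ¬ G.IsBridge e)
    (hcubic : ∀ v : V, (G.neighborSet v).ncard = 3)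
    (C : Fin 6 → Set (Sym2 V)) (hC : Is6c4c G C)
    (σ : Fin 3 → Fin 6) (hσ : Function.Injective σ) :
    ∃ φ : V → V → ℤ,
      (∀ u v, φ u v = - φ v u) ∧
      (∀ u v, φ u v ≠ 0 ↔
        s(u, v) ∈ {e ∈ G.edgeSet | Set.ncard {j : Fin 3 | e ∈ C (σ j)} ≤ 2}) ∧
      (∀ u v, |φ u v| < 4) ∧
      (∀ v, ∑ w, φ v w = 0) := by
  classical
  obtain ⟨hCeven, hCcount⟩ := hC
  set A : Set (Sym2 V) := (C (σ 0) \ C (σ 1)) ∪ (C (σ 1) \ C (σ 0)) with hA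
  set B : Set (Sym2 V) := (C (σ 0) \ C (σ 2)) ∪ (C (σ 2) \ C (σ 0)) with hB
  have hsubE : ∀ {e : Sym2 V} {i : Fin 6}, e ∈ C i → e ∈ G.edgeSet := fun {e i} he =>
    (hCeven i).1 he
  have hAsub : A ⊆ G.edgeSet := by
    rintro e (⟨he, -⟩ | ⟨he, -⟩) <;> exact hsubE he
  have hBsub : B ⊆ G.edgeSet := by
    rintro e (⟨he, -⟩ | ⟨he, -⟩) <;> exact hsubE he
  have hAirr : ∀ v : V, s(v, v) ∉ A := fun v h => G.irrefl (G.mem_edgeSet.mp (hAsub h))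
  have hBirr : ∀ v : V, s(v, v) ∉ B := fun v h => G.irrefl (G.mem_edgeSet.mp (hBsub h))
  have hsetdecomp : ∀ (i j : Fin 6) (v : V),
      {w | s(v, w) ∈ (C i \ C j) ∪ (C j \ C i)}
        = ({w | s(v, w) ∈ C i} \ {w | s(v, w) ∈ C j})
          ∪ ({w | s(v, w) ∈ C j} \ {w | s(v, w) ∈ C i}) := by
    intro i j v
    ext w
    simp [Set.mem_union, Set.mem_diff]
  have hAeven : ∀ v : V, Even {w | s(v, w) ∈ A}.ncard := by
    intro v
    rw [hA, hsetdecomp]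
    exact even_symmdiff_ncard _ _ ((hCeven (σ 0)).2 v) ((hCeven (σ 1)).2 v)
  have hBeven : ∀ v : V, Even {w | s(v, w) ∈ B}.ncard := by
    intro v
    rw [hB, hsetdecomp]
    exact even_symmdiff_ncard _ _ ((hCeven (σ 0)).2 v) ((hCeven (σ 2)).2 v)
  -- the key set identity
  have key : ∀ e : Sym2 V, (e ∈ A ∨ e ∈ B) ↔
      (e ∈ G.edgeSet ∧ Set.ncard {j : Fin 3 | e ∈ C (σ j)} ≤ 2) := by
    intro e
    constructor
    · rintro (h | h)
      · refine ⟨hAsub h, ?_⟩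
        rcases h with ⟨-, hn⟩ | ⟨-, hn⟩
        · exact fin3_ncard_le_two 1 hn
        · exact fin3_ncard_le_two 0 hn
      · refine ⟨hBsub h, ?_⟩
        rcases h with ⟨-, hn⟩ | ⟨-, hn⟩
        · exact fin3_ncard_le_two 2 hn
        · exact fin3_ncard_le_two 0 hn
    · rintro ⟨he, hle⟩
      have hP : ∃ j : Fin 3, e ∈ C (σ j) := by
        by_contra h
        push_neg at h
        have hsub : {i : Fin 6 | e ∈ C i} ⊆ (Set.range σ)ᶜ := by
          intro i hi
          rintro ⟨j, rfl⟩
          exact h j hi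
        have hr : (Set.range σ).ncard = 3 := by
          rw [← Set.image_univ, Set.ncard_image_of_injective _ hσ, Set.ncard_univ]
          simp
        have hcompl : ((Set.range σ)ᶜ).ncard = 3 := by
          have := Set.ncard_add_ncard_compl (Set.range σ) (Set.toFinite _) (Set.toFinite _)
          simp only [Nat.card_eq_fintype_card, Fintype.card_fin] at this
          omega
        have h4 := hCcount e he
        have := Set.ncard_le_ncard hsub (Set.toFinite _)
        omega
      have hQ : ∃ j : Fin 3, e ∉ C (σ j) := by
        by_contra h
        push_neg at h
        have huniv : {j : Fin 3 | e ∈ C (σ j)} = Set.univ := Set.eq_univ_of_forall h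
        rw [huniv, Set.ncard_univ] at hle
        simp at hle
      obtain ⟨jp, hjp⟩ := hP
      obtain ⟨jq, hjq⟩ := hQ
      by_cases h0 : e ∈ C (σ 0)
      · fin_cases jq
        · exact absurd h0 hjq
        · exact Or.inl (Or.inl ⟨h0, hjq⟩)
        · exact Or.inr (Or.inl ⟨h0, hjq⟩)
      · fin_cases jp
        · exact absurd hjp h0
        · exact Or.inl (Or.inr ⟨hjp, h0⟩)
        · exact Or.inr (Or.inr ⟨hjp, h0⟩)
  obtain ⟨fa, a1, a2, a3, a4⟩ := evenflow A.ncard A rfl hAirr hAeven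
  obtain ⟨fb, b1, b2, b3, b4⟩ := evenflow B.ncard B rfl hBirr hBeven
  refine ⟨fun u v => fa u v + 2 * fb u v, ?_, ?_, ?_, ?_⟩
  · intro u v
    show fa u v + 2 * fb u v = -(fa v u + 2 * fb v u)
    rw [a1 u v, b1 u v]
    ring
  · intro u v
    show fa u v + 2 * fb u v ≠ 0 ↔ _
    have hval : fa u v + 2 * fb u v ≠ 0 ↔ (fa u v ≠ 0 ∨ fb u v ≠ 0) := by
      rcases a3 u v with h | h | h <;> rcases b3 u v with h' | h' | h' <;>
        rw [h, h'] <;> norm_num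
    rw [hval, a2 u v, b2 u v]
    exact key s(u, v)
  · intro u v
    show |fa u v + 2 * fb u v| < 4
    rcases a3 u v with h | h | h <;> rcases b3 u v with h' | h' | h' <;>
      rw [h, h'] <;> norm_num
  · intro v
    show ∑ w, (fa v w + 2 * fb v w) = 0
    rw [Finset.sum_add_distrib, a4 v, ← Finset.mul_sum, b4 v]
    ring
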